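/- For ℓ ≥ 1 and λ < λ₁, with Ψ(t) = exp(-√(1+(λ₁-λ)|t|²))·|t|^{-(ℓ-1)/2}, there exists R > 0 such that for all |t| ≥ R, -ΔΨ(t) + (λ₁-λ)Ψ(t) ≥ (1/2)·exp(-√(1+(λ₁-λ)|t|²))·|t|^{-(ℓ+3)/2}. -/

import Mathlib

noncomputable def laplacian {ℓ : ℕ} (f : EuclideanSpace ℝ (Fin ℓ) → ℝ)
    (t : EuclideanSpace ℝ (Fin ℓ)) : ℝ :=
  ∑ i, fderiv ℝ (fun x => fderiv ℝ f x (EuclideanSpace.single i 1)) t (EuclideanSpace.single i 1)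

/-! Auxiliary definitions and lemmas -/

noncomputable def gfun (c a : ℝ) : ℝ → ℝ := fun s => Real.exp (-Real.sqrt (1 + c * s)) * s ^ a

noncomputable def gfun1 (c a : ℝ) : ℝ → ℝ := fun s =>
  gfun c a s * (a / s - c / (2 * Real.sqrt (1 + c * s)))

noncomputable def gfun2 (c a : ℝ) : ℝ → ℝ := fun s =>
  gfun c a s * ((a / s - c / (2 * Real.sqrt (1 + c * s))) ^ 2
    - a / s ^ 2 + c ^ 2 / (4 * Real.sqrt (1 + c * s) ^ 3))

lemma hasDerivAt_gfun (c a : ℝ) (hc : 0 < c) {s : ℝ} (hs : 0 < s) :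
    HasDerivAt (gfun c a) (gfun1 c a s) s := by
  have hpos : 0 < 1 + c * s := by positivity
  have hu : 0 < Real.sqrt (1 + c * s) := Real.sqrt_pos.2 hpos
  have h1 : HasDerivAt (fun s : ℝ => 1 + c * s) c s := by
    simpa using ((hasDerivAt_id s).const_mul c).const_add 1
  have h2 : HasDerivAt (fun s : ℝ => Real.sqrt (1 + c * s))
      (c / (2 * Real.sqrt (1 + c * s))) s := h1.sqrt (by positivity)
  have h3 : HasDerivAt (fun s : ℝ => Real.exp (-Real.sqrt (1 + c * s)))
      (Real.exp (-Real.sqrt (1 + c * s)) * (-(c / (2 * Real.sqrt (1 + c * s))))) s :=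
    h2.neg.exp
  have h4 : HasDerivAt (fun s : ℝ => s ^ a) (a * s ^ (a - 1)) s :=
    Real.hasDerivAt_rpow_const (Or.inl hs.ne')
  have h5 := h3.fun_mul h4
  have hsub : s ^ (a - 1) = s ^ a / s := by
    rw [Real.rpow_sub hs, Real.rpow_one]
  refine h5.congr_deriv ?_
  simp only [gfun1, gfun, hsub]
  field_simp
  ring

lemma hasDerivAt_gfun1 (c a : ℝ) (hc : 0 < c) {s : ℝ} (hs : 0 < s) :
    HasDerivAt (gfun1 c a) (gfun2 c a s) s := by
  have hpos : 0 < 1 + c * s := by positivity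
  have hu : 0 < Real.sqrt (1 + c * s) := Real.sqrt_pos.2 hpos
  have h1 : HasDerivAt (fun s : ℝ => 1 + c * s) c s := by
    simpa using ((hasDerivAt_id s).const_mul c).const_add 1
  have h2 : HasDerivAt (fun s : ℝ => Real.sqrt (1 + c * s))
      (c / (2 * Real.sqrt (1 + c * s))) s := h1.sqrt (by positivity)
  have h2' : HasDerivAt (fun s : ℝ => 2 * Real.sqrt (1 + c * s))
      (2 * (c / (2 * Real.sqrt (1 + c * s)))) s := h2.const_mul 2
  have hinv : HasDerivAt (fun s : ℝ => (2 * Real.sqrt (1 + c * s))⁻¹)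
      (-(2 * (c / (2 * Real.sqrt (1 + c * s)))) / (2 * Real.sqrt (1 + c * s)) ^ 2) s :=
    h2'.inv (by positivity)
  have hφ2 : HasDerivAt (fun s : ℝ => c / (2 * Real.sqrt (1 + c * s)))
      (c * (-(2 * (c / (2 * Real.sqrt (1 + c * s)))) / (2 * Real.sqrt (1 + c * s)) ^ 2)) s := by
    simpa [div_eq_mul_inv] using hinv.const_mul c
  have hφ1 : HasDerivAt (fun s : ℝ => a / s) (a * (-(s ^ 2)⁻¹)) s := by
    simpa [div_eq_mul_inv] using (hasDerivAt_inv hs.ne').const_mul a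
  have hφ : HasDerivAt (fun s : ℝ => a / s - c / (2 * Real.sqrt (1 + c * s)))
      (a * (-(s ^ 2)⁻¹) - c * (-(2 * (c / (2 * Real.sqrt (1 + c * s)))) /
        (2 * Real.sqrt (1 + c * s)) ^ 2)) s := hφ1.sub hφ2
  have h5 := (hasDerivAt_gfun c a hc hs).fun_mul hφ
  refine h5.congr_deriv ?_
  simp only [gfun2, gfun1, gfun]
  field_simp
  ring

lemma laplacian_radial {ℓ : ℕ} (g g1 g2 : ℝ → ℝ)
    (hg : ∀ s : ℝ, 0 < s → HasDerivAt g (g1 s) s)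
    (hg1 : ∀ s : ℝ, 0 < s → HasDerivAt g1 (g2 s) s)
    (t : EuclideanSpace ℝ (Fin ℓ)) (ht : t ≠ 0) :
    laplacian (fun x => g (∑ i, x i ^ 2)) t
      = 4 * (∑ i, t i ^ 2) * g2 (∑ i, t i ^ 2) + 2 * ℓ * g1 (∑ i, t i ^ 2) := by
  classical
  set S : EuclideanSpace ℝ (Fin ℓ) → ℝ := fun x => ∑ i, x i ^ 2 with hSdef
  have hSnorm : ∀ x : EuclideanSpace ℝ (Fin ℓ), S x = ‖x‖ ^ 2 := by
    intro x
    rw [EuclideanSpace.norm_eq, Real.sq_sqrt (by positivity)]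
    simp [hSdef, sq_abs]
  have hSpos : ∀ x : EuclideanSpace ℝ (Fin ℓ), x ≠ 0 → 0 < S x := by
    intro x hx
    rw [hSnorm]
    have hx' : 0 < ‖x‖ := norm_pos_iff.2 hx
    positivity
  -- derivative of S
  have hS : ∀ x : EuclideanSpace ℝ (Fin ℓ),
      HasFDerivAt S (∑ i, (2 * x i) • (EuclideanSpace.proj i :
        EuclideanSpace ℝ (Fin ℓ) →L[ℝ] ℝ)) x := by
    intro x
    have : ∀ i : Fin ℓ, HasFDerivAt (fun y : EuclideanSpace ℝ (Fin ℓ) => y i ^ 2)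
        ((2 * x i) • (EuclideanSpace.proj i : EuclideanSpace ℝ (Fin ℓ) →L[ℝ] ℝ)) x := by
      intro i
      have hp : HasFDerivAt (fun y : EuclideanSpace ℝ (Fin ℓ) => y i)
          (EuclideanSpace.proj i : EuclideanSpace ℝ (Fin ℓ) →L[ℝ] ℝ) x :=
        (EuclideanSpace.proj (𝕜 := ℝ) (ι := Fin ℓ) i).hasFDerivAt
      have hmul := hp.mul hp
      have h2 : (x i) • (EuclideanSpace.proj (𝕜 := ℝ) (ι := Fin ℓ) i) + (x i) •
          (EuclideanSpace.proj (𝕜 := ℝ) (ι := Fin ℓ) i)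
          = (2 * x i) • EuclideanSpace.proj (𝕜 := ℝ) (ι := Fin ℓ) i := by
        rw [← add_smul]; ring_nf
      rw [h2] at hmul
      simpa [pow_two, Pi.mul_def] using hmul
    exact HasFDerivAt.fun_sum (fun i _ => this i)
  have hDapply : ∀ (x : EuclideanSpace ℝ (Fin ℓ)) (i : Fin ℓ),
      (∑ j, (2 * x j) • (EuclideanSpace.proj j : EuclideanSpace ℝ (Fin ℓ) →L[ℝ] ℝ))
        (EuclideanSpace.single i 1) = 2 * x i := by
    intro x i
    rw [ContinuousLinearMap.sum_apply]
    simp only [ContinuousLinearMap.smul_apply, PiLp.proj_apply,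
      EuclideanSpace.single_apply, smul_eq_mul]
    rw [Finset.sum_eq_single i] <;> simp +contextual
  -- first derivative of F = g ∘ S
  have hF : ∀ x : EuclideanSpace ℝ (Fin ℓ), x ≠ 0 →
      HasFDerivAt (fun y => g (S y))
        ((g1 (S x)) • (∑ i, (2 * x i) • (EuclideanSpace.proj i :
          EuclideanSpace ℝ (Fin ℓ) →L[ℝ] ℝ))) x := by
    intro x hx
    exact (hg (S x) (hSpos x hx)).comp_hasFDerivAt x (hS x)
  have hne : ∀ᶠ x in nhds t, x ≠ 0 := eventually_ne_nhds ht
  -- fderiv applied to basis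
  have hfe : ∀ i : Fin ℓ, (fun x => fderiv ℝ (fun y => g (S y)) x (EuclideanSpace.single i 1))
      =ᶠ[nhds t] (fun x => g1 (S x) * (2 * x i)) := by
    intro i
    filter_upwards [hne] with x hx
    rw [(hF x hx).fderiv]
    simp only [ContinuousLinearMap.smul_apply, smul_eq_mul]
    rw [hDapply]
  -- second derivative
  have hG : ∀ i : Fin ℓ,
      HasFDerivAt (fun x : EuclideanSpace ℝ (Fin ℓ) => g1 (S x) * (2 * x i))
        ((g1 (S t)) • ((2:ℝ) • (EuclideanSpace.proj i : EuclideanSpace ℝ (Fin ℓ) →L[ℝ] ℝ))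
          + (2 * t i) • ((g2 (S t)) • (∑ j, (2 * t j) • (EuclideanSpace.proj j :
            EuclideanSpace ℝ (Fin ℓ) →L[ℝ] ℝ)))) t := by
    intro i
    have hc : HasFDerivAt (fun x : EuclideanSpace ℝ (Fin ℓ) => g1 (S x))
        ((g2 (S t)) • (∑ j, (2 * t j) • (EuclideanSpace.proj j :
          EuclideanSpace ℝ (Fin ℓ) →L[ℝ] ℝ))) t :=
      (hg1 (S t) (hSpos t ht)).comp_hasFDerivAt t (hS t)
    have hd : HasFDerivAt (fun x : EuclideanSpace ℝ (Fin ℓ) => 2 * x i)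
        ((2:ℝ) • (EuclideanSpace.proj i : EuclideanSpace ℝ (Fin ℓ) →L[ℝ] ℝ)) t := by
      have := ((EuclideanSpace.proj (𝕜 := ℝ) (ι := Fin ℓ) i).hasFDerivAt (x := t)).const_mul (2:ℝ)
      simpa using this
    exact hc.mul hd
  have hlap : ∀ i : Fin ℓ,
      fderiv ℝ (fun x => fderiv ℝ (fun y => g (S y)) x (EuclideanSpace.single i 1)) t
        (EuclideanSpace.single i 1)
      = 2 * g1 (S t) + 4 * g2 (S t) * t i ^ 2 := by
    intro i
    rw [(hfe i).fderiv_eq, (hG i).fderiv]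
    simp only [ContinuousLinearMap.add_apply, ContinuousLinearMap.smul_apply, smul_eq_mul]
    rw [hDapply]
    simp [EuclideanSpace.single_apply]
    ring
  unfold laplacian
  rw [Finset.sum_congr rfl (fun i _ => hlap i)]
  rw [Finset.sum_add_distrib]
  simp only [Finset.sum_const, Finset.card_univ, Fintype.card_fin, nsmul_eq_mul]
  rw [← Finset.mul_sum]
  ring

lemma key_ineq (c s m : ℝ) (hc : 0 < c) (hs : 1 ≤ s) (hcs : 3 ≤ c * s) :
    1 / (2 * s) ≤ c - (4 * s * (((-((m - 1) / 4)) / s - c / (2 * Real.sqrt (1 + c * s))) ^ 2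
      - (-((m - 1) / 4)) / s ^ 2 + c ^ 2 / (4 * Real.sqrt (1 + c * s) ^ 3))
      + 2 * m * ((-((m - 1) / 4)) / s - c / (2 * Real.sqrt (1 + c * s)))) := by
  have hs0 : 0 < s := by linarith
  have hpos : 0 < 1 + c * s := by positivity
  set u := Real.sqrt (1 + c * s) with hudef
  have hu : 0 < u := Real.sqrt_pos.2 hpos
  have hu2 : u ^ 2 = 1 + c * s := Real.sq_sqrt hpos.le
  have hc' : c = (u ^ 2 - 1) / s := by rw [hu2]; field_simp; ring
  have hid : c - (4 * s * (((-((m - 1) / 4)) / s - c / (2 * u)) ^ 2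
      - (-((m - 1) / 4)) / s ^ 2 + c ^ 2 / (4 * u ^ 3))
      + 2 * m * ((-((m - 1) / 4)) / s - c / (2 * u)))
      = c / u ^ 2 + c / u ^ 3 + ((m - 1) * (m - 3) / 4) / s := by
    rw [hc']
    field_simp
    ring
  rw [hid]
  have h1 : 3 / (4 * s) ≤ c / u ^ 2 := by
    rw [hu2, div_le_div_iff₀ (by positivity) (by positivity)]
    nlinarith
  have h2 : (0:ℝ) ≤ c / u ^ 3 := by positivity
  have h3 : (-1 / 4) / s ≤ ((m - 1) * (m - 3) / 4) / s := by
    rw [div_le_div_iff_of_pos_right hs0]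
    nlinarith [sq_nonneg (m - 2)]
  have h4 : 1 / (2 * s) = 3 / (4 * s) + (-1 / 4) / s := by field_simp; ring
  linarith

theorem stmt_5 {ℓ : ℕ} (hℓ : 1 ≤ ℓ) (lam lam₁ : ℝ) (hlt : lam < lam₁)
    (Ψ : EuclideanSpace ℝ (Fin ℓ) → ℝ)
    (hΨ : ∀ t, Ψ t = Real.exp (-Real.sqrt (1 + (lam₁ - lam) * ‖t‖ ^ 2)) *
      ‖t‖ ^ (-(((ℓ : ℝ) - 1) / 2))) :
    ∃ R > (0 : ℝ), ∀ t : EuclideanSpace ℝ (Fin ℓ), R ≤ ‖t‖ →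
      -laplacian Ψ t + (lam₁ - lam) * Ψ t ≥
        (1 / 2) * Real.exp (-Real.sqrt (1 + (lam₁ - lam) * ‖t‖ ^ 2)) *
          ‖t‖ ^ (-(((ℓ : ℝ) + 3) / 2)) := by
  set c : ℝ := lam₁ - lam with hcdef
  have hc : 0 < c := sub_pos.2 hlt
  set a : ℝ := -(((ℓ : ℝ) - 1) / 4) with hadef
  have hsum : ∀ x : EuclideanSpace ℝ (Fin ℓ), (∑ i, x i ^ 2) = ‖x‖ ^ 2 := by
    intro x
    rw [EuclideanSpace.norm_eq, Real.sq_sqrt (by positivity)]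
    simp [sq_abs]
  have hfun : Ψ = fun x => gfun c a (∑ i, x i ^ 2) := by
    funext x
    rw [hΨ x]
    simp only [gfun, hsum]
    congr 1
    rw [← Real.rpow_natCast ‖x‖ 2, ← Real.rpow_mul (norm_nonneg x)]
    congr 1
    rw [hadef]
    push_cast
    ring
  refine ⟨1 + Real.sqrt (3 / c), by positivity, fun t htR => ?_⟩
  have hr1 : 1 ≤ ‖t‖ := le_trans (by
    have := Real.sqrt_nonneg (3 / c); linarith) htR
  have ht0 : t ≠ 0 := by
    intro h
    rw [h, norm_zero] at hr1
    linarith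
  set s : ℝ := ∑ i, t i ^ 2 with hsdef
  have hsnorm : s = ‖t‖ ^ 2 := hsum t
  have hs1 : 1 ≤ s := by
    rw [hsnorm]
    nlinarith
  have hs0 : 0 < s := by linarith
  have hcs : 3 ≤ c * s := by
    have h1 : Real.sqrt (3 / c) ≤ ‖t‖ := by
      have := Real.sqrt_nonneg (3 / c); linarith
    have h2 : 3 / c ≤ ‖t‖ ^ 2 := by
      calc 3 / c = Real.sqrt (3 / c) ^ 2 := (Real.sq_sqrt (by positivity)).symm
        _ ≤ ‖t‖ ^ 2 := by nlinarith [Real.sqrt_nonneg (3 / c)]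
    rw [hsnorm]
    rw [div_le_iff₀ hc] at h2
    linarith
  have hlap : laplacian Ψ t = 4 * s * gfun2 c a s + 2 * ℓ * gfun1 c a s := by
    rw [hfun]
    exact laplacian_radial _ _ _ (fun r hr => hasDerivAt_gfun c a hc hr)
      (fun r hr => hasDerivAt_gfun1 c a hc hr) t ht0
  have hΨt : Ψ t = gfun c a s := by rw [hfun]
  have hP2 : ‖t‖ ^ (-(((ℓ : ℝ) + 3) / 2)) = s ^ a / s := by
    have h1 : ‖t‖ ^ (-(((ℓ : ℝ) + 3) / 2)) = s ^ (a - 1) := by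
      rw [hsnorm, ← Real.rpow_natCast ‖t‖ 2, ← Real.rpow_mul (norm_nonneg t)]
      congr 1
      rw [hadef]
      push_cast
      ring
    rw [h1, Real.rpow_sub hs0, Real.rpow_one]
  rw [ge_iff_le, hlap, hΨt, hP2, show (1 : ℝ) + c * ‖t‖ ^ 2 = 1 + c * s by rw [hsnorm]]
  have hEP : 0 < Real.exp (-Real.sqrt (1 + c * s)) * s ^ a := by
    have := Real.rpow_pos_of_pos hs0 a
    positivity
  have hkey := key_ineq c s (ℓ : ℝ) hc hs1 hcs
  have ha' : a = -(((ℓ : ℝ) - 1) / 4) := hadef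
  calc 1 / 2 * Real.exp (-Real.sqrt (1 + c * s)) * (s ^ a / s)
      = Real.exp (-Real.sqrt (1 + c * s)) * s ^ a * (1 / (2 * s)) := by ring
    _ ≤ Real.exp (-Real.sqrt (1 + c * s)) * s ^ a *
        (c - (4 * s * (((-(((ℓ : ℝ) - 1) / 4)) / s - c / (2 * Real.sqrt (1 + c * s))) ^ 2
          - (-(((ℓ : ℝ) - 1) / 4)) / s ^ 2 + c ^ 2 / (4 * Real.sqrt (1 + c * s) ^ 3))
          + 2 * (ℓ : ℝ) * ((-(((ℓ : ℝ) - 1) / 4)) / s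
            - c / (2 * Real.sqrt (1 + c * s))))) :=
        mul_le_mul_of_nonneg_left hkey hEP.le
    _ = -(4 * s * gfun2 c a s + 2 * ℓ * gfun1 c a s) + c * gfun c a s := by
        simp only [gfun, gfun1, gfun2, ha']
        ring
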